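/- Let Ω be an open bounded subset of ℝ^d, T > 0, H : ℝ → [0, ∞) a convex continuous nonnegative function, and C ≥ 0. Let Z : [0, T] → L²(Ω) be continuous for the weak topology of L²(Ω) (i.e. for every g ∈ L²(Ω), the map t ↦ ∫_Ω Z(t)(x) g(x) dx is continuous on [0, T]). If ∫_Ω H(Z(t)(x)) dx ≤ C for almost every t ∈ (0, T), then ∫_Ω H(Z(t)(x)) dx ≤ C for every t ∈ [0, T]. -/

import Mathlib

open MeasureTheory Filter Topology

section AuxStmt19

private lemma stmt19_chord_mid {H : ℝ → ℝ} (hconv : ConvexOn ℝ Set.univ H) {p q y : ℝ}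
    (hpq : p < q) (hy : y ∈ Set.Icc p q) : H y ≤ H p + (H q - H p) / (q - p) * (y - p) := by
  have hD : (0:ℝ) < q - p := by linarith
  have h1 : H ((q - y)/(q - p) * p + (y - p)/(q - p) * q)
      ≤ (q - y)/(q - p) * H p + (y - p)/(q - p) * H q :=
    hconv.2 (Set.mem_univ p) (Set.mem_univ q)
      (div_nonneg (by linarith [hy.2]) hD.le) (div_nonneg (by linarith [hy.1]) hD.le)
      (by field_simp; ring)
  have hpt : (q - y)/(q - p) * p + (y - p)/(q - p) * q = y := by field_simp <;> ring
  have hrhs : H p + (H q - H p) / (q - p) * (y - p)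
      = (q - y)/(q - p) * H p + (y - p)/(q - p) * H q := by field_simp <;> ring
  rw [hpt] at h1
  rw [hrhs]; exact h1

private lemma stmt19_chord_left {H : ℝ → ℝ} (hconv : ConvexOn ℝ Set.univ H) {p q x : ℝ}
    (hpq : p < q) (hx : x ≤ p) : H p + (H q - H p) / (q - p) * (x - p) ≤ H x := by
  have hD : (0:ℝ) < q - p := by linarith
  rcases eq_or_lt_of_le hx with heq | hx
  · rw [heq]; simp
  have hE : (0:ℝ) < q - x := by linarith
  have h1 : H ((q - p)/(q - x) * x + (p - x)/(q - x) * q)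
      ≤ (q - p)/(q - x) * H x + (p - x)/(q - x) * H q :=
    hconv.2 (Set.mem_univ x) (Set.mem_univ q)
      (div_nonneg hD.le hE.le) (div_nonneg (by linarith) hE.le) (by field_simp; ring)
  have hpt : (q - p)/(q - x) * x + (p - x)/(q - x) * q = p := by field_simp <;> ring
  rw [hpt] at h1
  have key : (q - x) * H p ≤ (q - p) * H x + (p - x) * H q := by
    have h2 := mul_le_mul_of_nonneg_left h1 hE.le
    have h3 : (q - x) * ((q - p)/(q - x) * H x + (p - x)/(q - x) * H q)
        = (q - p) * H x + (p - x) * H q := by field_simp <;> ring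
    linarith [h3 ▸ h2]
  have : (H q - H p) / (q - p) * (x - p) ≤ H x - H p := by
    rw [div_mul_eq_mul_div, div_le_iff₀ hD]
    nlinarith [key]
  linarith

private lemma stmt19_chord_right {H : ℝ → ℝ} (hconv : ConvexOn ℝ Set.univ H) {p q x : ℝ}
    (hpq : p < q) (hx : q ≤ x) : H p + (H q - H p) / (q - p) * (x - p) ≤ H x := by
  have hD : (0:ℝ) < q - p := by linarith
  rcases eq_or_lt_of_le hx with heq | hx
  · rw [← heq]
    have : (H q - H p)/(q - p) * (q - p) = H q - H p := div_mul_cancel₀ _ hD.ne'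
    linarith
  have hE : (0:ℝ) < x - p := by linarith
  have h1 : H ((x - q)/(x - p) * p + (q - p)/(x - p) * x)
      ≤ (x - q)/(x - p) * H p + (q - p)/(x - p) * H x :=
    hconv.2 (Set.mem_univ p) (Set.mem_univ x)
      (div_nonneg (by linarith) hE.le) (div_nonneg hD.le hE.le) (by field_simp; ring)
  have hpt : (x - q)/(x - p) * p + (q - p)/(x - p) * x = q := by field_simp <;> ring
  rw [hpt] at h1
  have key : (x - p) * H q ≤ (x - q) * H p + (q - p) * H x := by
    have h2 := mul_le_mul_of_nonneg_left h1 hE.le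
    have h3 : (x - p) * ((x - q)/(x - p) * H p + (q - p)/(x - p) * H x)
        = (x - q) * H p + (q - p) * H x := by field_simp <;> ring
    linarith [h3 ▸ h2]
  have : (H q - H p) / (q - p) * (x - p) ≤ H x - H p := by
    rw [div_mul_eq_mul_div, div_le_iff₀ hD]
    nlinarith [key]
  linarith

private noncomputable def stmt19F (H : ℝ → ℝ) (pq : ℚ × ℚ) : ℝ × ℝ :=
  if _ : (pq.1 : ℝ) < (pq.2 : ℝ) then
    ((H pq.2 - H pq.1) / ((pq.2 : ℝ) - pq.1),
      H pq.1 - (H pq.2 - H pq.1) / ((pq.2 : ℝ) - pq.1) * pq.1 -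
        sSup ((fun y => H pq.1 + (H pq.2 - H pq.1) / ((pq.2 : ℝ) - pq.1) * (y - pq.1) - H y) ''
          Set.Icc (pq.1 : ℝ) (pq.2 : ℝ)))
  else (0, 0)

private lemma stmt19F_pos {H : ℝ → ℝ} {p q : ℚ} (h : (p : ℝ) < (q : ℝ)) :
    stmt19F H (p, q) = ((H q - H p) / ((q : ℝ) - p),
      H p - (H q - H p) / ((q : ℝ) - p) * p -
        sSup ((fun y => H p + (H q - H p) / ((q : ℝ) - p) * (y - p) - H y) ''
          Set.Icc (p : ℝ) (q : ℝ))) := by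
  simp only [stmt19F, dif_pos h]

private lemma stmt19F_minorant {H : ℝ → ℝ} (hconv : ConvexOn ℝ Set.univ H) (hcont : Continuous H)
    (hnn : ∀ x : ℝ, 0 ≤ H x) (pq : ℚ × ℚ) (x : ℝ) :
    (stmt19F H pq).1 * x + (stmt19F H pq).2 ≤ H x := by
  obtain ⟨p, q⟩ := pq
  by_cases h : (p : ℝ) < (q : ℝ)
  · rw [stmt19F_pos h]
    set p' : ℝ := (p : ℝ)
    set q' : ℝ := (q : ℝ)
    set m : ℝ := (H q' - H p') / (q' - p') with hm
    set e : ℝ := sSup ((fun y => H p' + m * (y - p') - H y) '' Set.Icc p' q') with he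
    have hbdd : BddAbove ((fun y => H p' + m * (y - p') - H y) '' Set.Icc p' q') :=
      (isCompact_Icc.image (by fun_prop)).bddAbove
    have he0 : 0 ≤ e := by
      have h0 : (0:ℝ) ∈ (fun y => H p' + m * (y - p') - H y) '' Set.Icc p' q' :=
        ⟨p', ⟨le_refl p', h.le⟩, by ring⟩
      exact le_csSup hbdd h0
    simp only
    have hval : m * x + (H p' - m * p' - e) = H p' + m * (x - p') - e := by ring
    rw [hval]
    rcases le_or_gt x p' with hxp | hxp
    · linarith [stmt19_chord_left hconv h hxp]
    rcases le_or_gt q' x with hqx | hqx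
    · linarith [stmt19_chord_right hconv h hqx]
    · have hxmem : x ∈ Set.Icc p' q' := ⟨hxp.le, hqx.le⟩
      have hle : H p' + m * (x - p') - H x ≤ e := le_csSup hbdd ⟨x, hxmem, rfl⟩
      linarith
  · simp only [stmt19F, dif_neg h]
    simpa using hnn x

private lemma stmt19_exists_affine_minorants {H : ℝ → ℝ} (hconv : ConvexOn ℝ Set.univ H)
    (hcont : Continuous H) (hnn : ∀ x : ℝ, 0 ≤ H x) :
    ∃ a b : ℕ → ℝ, (∀ k x, a k * x + b k ≤ H x) ∧
      (∀ x ε : ℝ, 0 < ε → ∃ k, H x - ε ≤ a k * x + b k) := by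
  classical
  obtain ⟨f, hf⟩ : ∃ f : ℕ → ℚ × ℚ, Function.Surjective f :=
    ⟨(Denumerable.eqv (ℚ × ℚ)).symm, (Denumerable.eqv (ℚ × ℚ)).symm.surjective⟩
  refine ⟨fun n => (stmt19F H (f n)).1, fun n => (stmt19F H (f n)).2,
    fun k x => stmt19F_minorant hconv hcont hnn _ x, ?_⟩
  intro x ε hε
  obtain ⟨δ, hδ, hδprop⟩ := Metric.continuous_iff.mp hcont x (ε/3) (by linarith)
  obtain ⟨p, hp1, hp2⟩ := exists_rat_btwn (show x - δ < x by linarith)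
  obtain ⟨q, hq1, hq2⟩ := exists_rat_btwn (show x < x + δ by linarith)
  have hpq : (p : ℝ) < (q : ℝ) := lt_trans hp2 hq1
  obtain ⟨n, hn⟩ : ∃ n, f n = (p, q) := hf (p, q)
  refine ⟨n, ?_⟩
  show H x - ε ≤ (stmt19F H (f n)).1 * x + (stmt19F H (f n)).2
  rw [hn, stmt19F_pos hpq]
  set p' : ℝ := (p : ℝ)
  set q' : ℝ := (q : ℝ)
  set m : ℝ := (H q' - H p') / (q' - p') with hm
  set e : ℝ := sSup ((fun y => H p' + m * (y - p') - H y) '' Set.Icc p' q') with he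
  simp only
  have hval : m * x + (H p' - m * p' - e) = H p' + m * (x - p') - e := by ring
  rw [hval]
  have hD : (0:ℝ) < q' - p' := by linarith
  have hHp : |H p' - H x| < ε/3 := by
    have hd : dist p' x < δ := by
      rw [Real.dist_eq, abs_sub_lt_iff]; constructor <;> linarith
    have := hδprop p' hd
    rwa [Real.dist_eq] at this
  have hHq : |H q' - H x| < ε/3 := by
    have hd : dist q' x < δ := by
      rw [Real.dist_eq, abs_sub_lt_iff]; constructor <;> linarith
    have := hδprop q' hd
    rwa [Real.dist_eq] at this
  have hmqp : m * (q' - p') = H q' - H p' := div_mul_cancel₀ _ hD.ne'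
  have hchordx : H x - ε/3 ≤ H p' + m * (x - p') := by
    rcases le_or_gt 0 m with hm0 | hm0
    · nlinarith [abs_lt.mp hHp, mul_nonneg hm0 (show (0:ℝ) ≤ x - p' by linarith)]
    · have hmx : m * (q' - p') ≤ m * (x - p') := by nlinarith
      nlinarith [abs_lt.mp hHq]
  have hebound : e ≤ 2*ε/3 := by
    have hne : ((fun y => H p' + m * (y - p') - H y) '' Set.Icc p' q').Nonempty :=
      ⟨H p' + m * (p' - p') - H p', ⟨p', ⟨le_refl _, hpq.le⟩, rfl⟩⟩
    apply csSup_le hne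
    rintro z ⟨y, hy, rfl⟩
    have hHy : |H y - H x| < ε/3 := by
      have hd : dist y x < δ := by
        rw [Real.dist_eq, abs_sub_lt_iff]
        constructor
        · linarith [hy.2]
        · linarith [hy.1]
      have := hδprop y hd
      rwa [Real.dist_eq] at this
    have hchordy : H p' + m * (y - p') ≤ H x + ε/3 := by
      rcases le_or_gt 0 m with hm0 | hm0
      · have hmy : m * (y - p') ≤ m * (q' - p') := by nlinarith [hy.2]
        nlinarith [abs_lt.mp hHq]
      · have hmy : m * (y - p') ≤ 0 :=
          mul_nonpos_of_nonpos_of_nonneg hm0.le (by linarith [hy.1])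
        nlinarith [abs_lt.mp hHp]
    have := abs_lt.mp hHy
    simp only
    linarith
  have := abs_lt.mp hHp
  linarith [hchordx, hebound]


private lemma stmt19_exists_approx_seq {H : ℝ → ℝ} (hconv : ConvexOn ℝ Set.univ H)
    (hcont : Continuous H) (hnn : ∀ x : ℝ, 0 ≤ H x) :
    ∃ (a b : ℕ → ℝ) (g : ℕ → ℝ → ℝ),
      (∀ k x, a k * x + b k ≤ H x) ∧
      (∀ n y, ∃ k, k ≤ n ∧ g n y = a k * y + b k) ∧
      (∀ n k y, k ≤ n → a k * y + b k ≤ g n y) ∧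
      (∀ n, Continuous (g n)) ∧
      (∀ n y, 0 ≤ g n y) ∧
      (∀ n, ∃ A B : ℝ, 0 ≤ A ∧ 0 ≤ B ∧ ∀ y, |g n y| ≤ A * |y| + B) ∧
      (∀ y, Tendsto (fun n => g n y) atTop (𝓝 (H y))) := by
  obtain ⟨a₀, b₀, hmin₀, happrox₀⟩ := stmt19_exists_affine_minorants hconv hcont hnn
  set a : ℕ → ℝ := fun n => Nat.casesOn n 0 a₀ with ha
  set b : ℕ → ℝ := fun n => Nat.casesOn n 0 b₀ with hb
  have hmin : ∀ k x, a k * x + b k ≤ H x := by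
    intro k x
    cases k with
    | zero =>
      show (0:ℝ) * x + 0 ≤ H x
      simpa using hnn x
    | succ k => exact hmin₀ k x
  have happrox : ∀ x ε : ℝ, 0 < ε → ∃ k, H x - ε ≤ a k * x + b k := by
    intro x ε hε
    obtain ⟨k, hk⟩ := happrox₀ x ε hε
    exact ⟨k + 1, hk⟩
  set g : ℕ → ℝ → ℝ :=
    fun n => Nat.rec (fun y => a 0 * y + b 0)
      (fun m gm y => max (gm y) (a (m+1) * y + b (m+1))) n with hg
  have hgsucc : ∀ n y, g (n+1) y = max (g n y) (a (n+1) * y + b (n+1)) := fun n y => rfl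
  have hgzero : ∀ y, g 0 y = a 0 * y + b 0 := fun y => rfl
  have hatt : ∀ n y, ∃ k, k ≤ n ∧ g n y = a k * y + b k := by
    intro n y
    induction n with
    | zero => exact ⟨0, le_refl 0, rfl⟩
    | succ n ih =>
      obtain ⟨k, hk, he⟩ := ih
      rcases le_total (g n y) (a (n+1) * y + b (n+1)) with h | h
      · exact ⟨n+1, le_refl _, by rw [hgsucc, max_eq_right h]⟩
      · exact ⟨k, hk.trans (Nat.le_succ n), by rw [hgsucc, max_eq_left h]; exact he⟩
  have hle : ∀ n k y, k ≤ n → a k * y + b k ≤ g n y := by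
    intro n
    induction n with
    | zero => intro k y hk; interval_cases k; rw [hgzero]
    | succ n ih =>
      intro k y hk
      rcases Nat.lt_succ_iff_lt_or_eq.mp (Nat.lt_succ_of_le hk) with h | h
      · rw [hgsucc]; exact le_max_of_le_left (ih k y (Nat.lt_succ_iff.mp h))
      · subst h; rw [hgsucc]; exact le_max_right _ _
  have hgcont : ∀ n, Continuous (g n) := by
    intro n
    induction n with
    | zero => show Continuous fun y => a 0 * y + b 0; fun_prop
    | succ n ih =>
      show Continuous fun y => max (g n y) (a (n+1) * y + b (n+1))
      exact ih.max (by fun_prop)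
  have hgnn : ∀ n y, 0 ≤ g n y := by
    intro n y
    have := hle n 0 y (Nat.zero_le n)
    have h0 : a 0 * y + b 0 = 0 := by show (0:ℝ) * y + 0 = 0; ring
    linarith
  have hgrow : ∀ n, ∃ A B : ℝ, 0 ≤ A ∧ 0 ≤ B ∧ ∀ y, |g n y| ≤ A * |y| + B := by
    intro n
    induction n with
    | zero =>
      refine ⟨|a 0|, |b 0|, abs_nonneg _, abs_nonneg _, fun y => ?_⟩
      rw [hgzero]
      calc |a 0 * y + b 0| ≤ |a 0 * y| + |b 0| := abs_add_le _ _
        _ = |a 0| * |y| + |b 0| := by rw [abs_mul]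
    | succ n ih =>
      obtain ⟨A, B, hA, hB, hAB⟩ := ih
      refine ⟨A + |a (n+1)|, B + |b (n+1)|, by positivity, by positivity, fun y => ?_⟩
      rw [hgsucc]
      refine (abs_max_le_max_abs_abs).trans (max_le ?_ ?_)
      · have := hAB y
        have h1 : (0:ℝ) ≤ |a (n+1)| * |y| := by positivity
        linarith [abs_nonneg (b (n+1))]
      · calc |a (n+1) * y + b (n+1)| ≤ |a (n+1)| * |y| + |b (n+1)| := by
              rw [← abs_mul]; exact abs_add_le _ _
          _ ≤ (A + |a (n+1)|) * |y| + (B + |b (n+1)|) := by nlinarith [abs_nonneg y]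
  have hgleH : ∀ n y, g n y ≤ H y := by
    intro n y
    obtain ⟨k, _, he⟩ := hatt n y
    rw [he]; exact hmin k y
  have hmono : ∀ y, Monotone fun n => g n y := by
    intro y n m hnm
    show g n y ≤ g m y
    obtain ⟨k, hk, he⟩ := hatt n y
    rw [he]
    exact hle m k y (hk.trans hnm)
  have htend : ∀ y, Tendsto (fun n => g n y) atTop (𝓝 (H y)) := by
    intro y
    have hbdd : BddAbove (Set.range fun n => g n y) := by
      refine ⟨H y, ?_⟩
      rintro z ⟨n, rfl⟩
      exact hgleH n y
    have hsup : (⨆ n, g n y) = H y := by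
      refine le_antisymm (ciSup_le fun n => hgleH n y) ?_
      refine le_of_forall_lt fun c hc => ?_
      obtain ⟨k, hk⟩ := happrox y ((H y - c)/2) (by linarith)
      have h1 : c < a k * y + b k := by linarith
      exact h1.trans_le ((hle k k y (le_refl k)).trans (le_ciSup hbdd k))
    have := tendsto_atTop_ciSup (hmono y) hbdd
    rwa [hsup] at this
  exact ⟨a, b, g, hmin, hatt, hle, hgcont, hgnn, hgrow, htend⟩

end AuxStmt19

/-- If `Z : [0,T] → L²(Ω)` is continuous for the weak topology of `L²(Ω)` and
`∫_Ω H(Z(t)) dx ≤ C` for a.e. `t ∈ (0,T)`, where `H : ℝ → [0,∞)` is convex continuous,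
then `∫_Ω H(Z(t)) dx ≤ C` for every `t ∈ [0,T]` (integrals taken in `[0,∞]`). -/
theorem stmt19 (d : ℕ) (Ω : Set (EuclideanSpace ℝ (Fin d)))
    (hΩo : IsOpen Ω) (hΩb : Bornology.IsBounded Ω)
    (T : ℝ) (hT : 0 < T)
    (H : ℝ → ℝ) (hHconv : ConvexOn ℝ Set.univ H) (hHcont : Continuous H)
    (hHnn : ∀ x : ℝ, 0 ≤ H x)
    (C : ℝ) (hC : 0 ≤ C)
    (Z : ℝ → EuclideanSpace ℝ (Fin d) → ℝ)
    (hZmem : ∀ t ∈ Set.Icc (0:ℝ) T, MemLp (Z t) 2 (volume.restrict Ω))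
    (hZweak : ∀ g : EuclideanSpace ℝ (Fin d) → ℝ, MemLp g 2 (volume.restrict Ω) →
      ContinuousOn (fun t => ∫ x, Z t x * g x ∂(volume.restrict Ω)) (Set.Icc (0:ℝ) T))
    (hbound : ∀ᵐ t ∂(volume.restrict (Set.Ioo (0:ℝ) T)),
      ∫⁻ x, ENNReal.ofReal (H (Z t x)) ∂(volume.restrict Ω) ≤ ENNReal.ofReal C) :
    ∀ t ∈ Set.Icc (0:ℝ) T,
      ∫⁻ x, ENNReal.ofReal (H (Z t x)) ∂(volume.restrict Ω) ≤ ENNReal.ofReal C := by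
  classical
  intro t₀ ht₀
  set μ := volume.restrict Ω with hμ
  haveI hfin : IsFiniteMeasure μ := ⟨by
    rw [Measure.restrict_apply_univ]; exact hΩb.measure_lt_top⟩
  obtain ⟨a, b, g, hmin, hatt, hle, hgcont, hgnn, hgrow, htend⟩ :=
    stmt19_exists_approx_seq hHconv hHcont hHnn
  -- measurable representative of Z t₀
  have hZ0 : AEStronglyMeasurable (Z t₀) μ := (hZmem t₀ ht₀).1
  set u : EuclideanSpace ℝ (Fin d) → ℝ := hZ0.mk (Z t₀) with hu
  have hum : Measurable u := hZ0.stronglyMeasurable_mk.measurable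
  have huae : Z t₀ =ᵐ[μ] u := hZ0.ae_eq_mk
  -- integrability of Z t
  have hint : ∀ t ∈ Set.Icc (0:ℝ) T, Integrable (Z t) μ := fun t ht =>
    memLp_one_iff_integrable.mp ((hZmem t ht).mono_exponent (by norm_num))
  have hgint : ∀ n, ∀ t ∈ Set.Icc (0:ℝ) T, Integrable (fun x => g n (Z t x)) μ := by
    intro n t ht
    obtain ⟨A, B, hA, hB, hAB⟩ := hgrow n
    refine Integrable.mono' (((hint t ht).abs.const_mul A).add (integrable_const B))
      ((hgcont n).comp_aestronglyMeasurable (hZmem t ht).1)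
      (Filter.Eventually.of_forall fun x => ?_)
    simpa using hAB (Z t x)
  -- g n ≤ H
  have hgleH : ∀ n y, g n y ≤ H y := by
    intro n y
    obtain ⟨k, _, he⟩ := hatt n y
    rw [he]; exact hmin k y
  -- the bad set is null
  have hbad : volume {t | t ∈ Set.Ioo (0:ℝ) T ∧
      ¬ (∫⁻ x, ENNReal.ofReal (H (Z t x)) ∂μ ≤ ENNReal.ofReal C)} = 0 := by
    have h := (ae_restrict_iff' measurableSet_Ioo).mp hbound
    rw [ae_iff] at h
    refine measure_mono_null ?_ h
    intro t ⟨h1, h2⟩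
    simp only [Set.mem_setOf_eq]
    intro hcontra
    exact h2 (hcontra h1)
  -- key pointwise bound: for good t, ∫ g n (Z t) ≤ C
  have hkey : ∀ n, ∀ t ∈ Set.Icc (0:ℝ) T,
      (∫⁻ x, ENNReal.ofReal (H (Z t x)) ∂μ ≤ ENNReal.ofReal C) →
      ∫ x, g n (Z t x) ∂μ ≤ C := by
    intro n t ht hb
    have h1 : ∫ x, g n (Z t x) ∂μ = (∫⁻ x, ENNReal.ofReal (g n (Z t x)) ∂μ).toReal :=
      integral_eq_lintegral_of_nonneg_ae (Filter.Eventually.of_forall fun x => hgnn n _)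
        ((hgcont n).comp_aestronglyMeasurable (hZmem t ht).1)
    rw [h1]
    have h2 : ∫⁻ x, ENNReal.ofReal (g n (Z t x)) ∂μ ≤ ENNReal.ofReal C :=
      le_trans (lintegral_mono fun x => ENNReal.ofReal_le_ofReal (hgleH n _)) hb
    calc (∫⁻ x, ENNReal.ofReal (g n (Z t x)) ∂μ).toReal
        ≤ (ENNReal.ofReal C).toReal := ENNReal.toReal_mono ENNReal.ofReal_ne_top h2
      _ = C := ENNReal.toReal_ofReal hC
  -- main step: for each n, lintegral bound at t₀ (with u)
  have main : ∀ n, ∫⁻ x, ENNReal.ofReal (g n (u x)) ∂μ ≤ ENNReal.ofReal C := by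
    intro n
    -- partition of ℝ according to which affine piece attains g n first
    set B' : ℕ → Set ℝ := fun k =>
      {y | a k * y + b k = g n y ∧ ∀ j < k, a j * y + b j ≠ g n y} with hB'
    have hB'meas : ∀ k, MeasurableSet (B' k) := by
      intro k
      have hgm : Measurable (g n) := (hgcont n).measurable
      have hkm : ∀ j : ℕ, Measurable (fun y : ℝ => a j * y + b j) := fun j =>
        (by fun_prop : Continuous (fun y : ℝ => a j * y + b j)).measurable
      have heq : B' k = {y | a k * y + b k = g n y} ∩
          ⋂ (j : ℕ) (_ : j < k), {y | a j * y + b j = g n y}ᶜ := by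
        ext y
        simp only [hB', Set.mem_setOf_eq, Set.mem_inter_iff, Set.mem_iInter, Set.mem_compl_iff]
      rw [heq]
      exact (measurableSet_eq_fun (hkm k) hgm).inter
        (MeasurableSet.iInter fun j => MeasurableSet.iInter fun _ =>
          (measurableSet_eq_fun (hkm j) hgm).compl)
    have hcov : ∀ y : ℝ, ∃ k, k ≤ n ∧ y ∈ B' k ∧ ∀ k', y ∈ B' k' → k' = k := by
      intro y
      obtain ⟨k₁, hk₁n, hk₁⟩ := hatt n y
      have hP : ∃ k, a k * y + b k = g n y := ⟨k₁, hk₁.symm⟩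
      refine ⟨Nat.find hP, (Nat.find_min' hP hk₁.symm).trans hk₁n,
        ⟨Nat.find_spec hP, fun j hj => Nat.find_min hP hj⟩, ?_⟩
      intro k' hk'
      refine le_antisymm ?_ (Nat.find_min' hP hk'.1)
      by_contra hlt
      exact hk'.2 (Nat.find hP) (not_le.mp hlt) (Nat.find_spec hP)
    set A : ℕ → Set (EuclideanSpace ℝ (Fin d)) := fun k => u ⁻¹' (B' k) with hA
    have hAmeas : ∀ k, MeasurableSet (A k) := fun k => hum (hB'meas k)
    -- representation of the indicator sum
    have hFrep : ∀ (t : ℝ) (x : EuclideanSpace ℝ (Fin d)), ∃ k, k ≤ n ∧ u x ∈ B' k ∧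
        (∑ k' ∈ Finset.range (n+1), (A k').indicator (fun x => a k' * Z t x + b k') x)
          = a k * Z t x + b k := by
      intro t x
      obtain ⟨k, hkn, hkmem, huniq⟩ := hcov (u x)
      refine ⟨k, hkn, hkmem, ?_⟩
      have h1 : ∀ k' ∈ Finset.range (n+1), k' ≠ k →
          (A k').indicator (fun x => a k' * Z t x + b k') x = 0 := by
        intro k' _ hne
        exact Set.indicator_of_notMem (s := A k') (fun hmem => hne (huniq k' hmem)) _
      rw [Finset.sum_eq_single_of_mem k (Finset.mem_range.mpr (Nat.lt_succ_of_le hkn)) h1]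
      exact Set.indicator_of_mem (show x ∈ A k from hkmem) _
    -- each indicator summand is integrable
    have hFkint : ∀ t ∈ Set.Icc (0:ℝ) T, ∀ k : ℕ,
        Integrable ((A k).indicator (fun x => a k * Z t x + b k)) μ := fun t ht k =>
      (((hint t ht).const_mul (a k)).add (integrable_const (b k))).indicator (hAmeas k)
    -- definition of φ
    set φ : ℝ → ℝ := fun t => ∑ k ∈ Finset.range (n+1),
      (a k * (∫ x, Z t x * (A k).indicator (fun _ => (1:ℝ)) x ∂μ) + b k * (μ (A k)).toReal)
      with hφ
    -- φ equals the integral of the indicator sum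
    have hsummand : ∀ t ∈ Set.Icc (0:ℝ) T, ∀ k : ℕ,
        a k * (∫ x, Z t x * (A k).indicator (fun _ => (1:ℝ)) x ∂μ) + b k * (μ (A k)).toReal
          = ∫ x, (A k).indicator (fun x => a k * Z t x + b k) x ∂μ := by
      intro t ht k
      have h1 : (fun x => Z t x * (A k).indicator (fun _ => (1:ℝ)) x)
          = (A k).indicator (Z t) := by
        funext x
        by_cases hx : x ∈ A k <;>
          simp [Set.indicator_of_mem, Set.indicator_of_notMem, hx]
      rw [h1, integral_indicator (hAmeas k), integral_indicator (hAmeas k)]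
      have hZint : IntegrableOn (Z t) (A k) μ := (hint t ht).integrableOn
      rw [integral_add (hZint.const_mul (a k)) (integrableOn_const (measure_lt_top μ _).ne)]
      rw [integral_const_mul, setIntegral_const, smul_eq_mul, mul_comm (μ.real (A k)) (b k)]; rfl
    have hφeq : ∀ t ∈ Set.Icc (0:ℝ) T, φ t =
        ∫ x, (∑ k ∈ Finset.range (n+1), (A k).indicator (fun x => a k * Z t x + b k) x) ∂μ := by
      intro t ht
      rw [hφ]
      simp only
      rw [integral_finset_sum _ (fun k _ => hFkint t ht k)]
      exact Finset.sum_congr rfl fun k _ => hsummand t ht k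
    -- continuity of φ on [0,T]
    have hφcont : ContinuousOn φ (Set.Icc (0:ℝ) T) := by
      rw [hφ]
      apply continuousOn_finset_sum
      intro k _
      have hgk : MemLp ((A k).indicator (fun _ => (1:ℝ))) 2 μ :=
        (memLp_const (1:ℝ)).indicator (hAmeas k)
      exact ((continuousOn_const.mul (hZweak _ hgk)).add continuousOn_const)
    -- φ t ≤ C for good t
    have hφle : ∀ t ∈ Set.Icc (0:ℝ) T,
        (∫⁻ x, ENNReal.ofReal (H (Z t x)) ∂μ ≤ ENNReal.ofReal C) → φ t ≤ C := by
      intro t ht hb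
      rw [hφeq t ht]
      have hptwise : ∀ x, (∑ k' ∈ Finset.range (n+1),
          (A k').indicator (fun x => a k' * Z t x + b k') x) ≤ g n (Z t x) := by
        intro x
        obtain ⟨k, hkn, _, heqs⟩ := hFrep t x
        rw [heqs]
        exact hle n k _ hkn
      calc ∫ x, (∑ k' ∈ Finset.range (n+1),
              (A k').indicator (fun x => a k' * Z t x + b k') x) ∂μ
          ≤ ∫ x, g n (Z t x) ∂μ :=
            integral_mono (integrable_finset_sum _ (fun k _ => hFkint t ht k))
              (hgint n t ht) hptwise
        _ ≤ C := hkey n t ht hb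
    -- φ t₀ ≤ C by continuity and a.e. bound
    have hφt₀ : φ t₀ ≤ C := by
      by_contra hlt
      push_neg at hlt
      have hc : ContinuousWithinAt φ (Set.Icc (0:ℝ) T) t₀ := hφcont t₀ ht₀
      have hmem : φ ⁻¹' Set.Ioi C ∈ 𝓝[Set.Icc (0:ℝ) T] t₀ := hc (Ioi_mem_nhds hlt)
      rw [mem_nhdsWithin] at hmem
      obtain ⟨U, hUopen, hU0, hUsub⟩ := hmem
      have hclos : t₀ ∈ closure (Set.Ioo (0:ℝ) T) := by
        rw [closure_Ioo hT.ne]; exact ht₀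
      have hne : (U ∩ Set.Ioo (0:ℝ) T).Nonempty := mem_closure_iff.mp hclos U hUopen hU0
      have hpos : 0 < volume (U ∩ Set.Ioo (0:ℝ) T) :=
        (hUopen.inter isOpen_Ioo).measure_pos volume hne
      have hsub : U ∩ Set.Ioo (0:ℝ) T ⊆ {t | t ∈ Set.Ioo (0:ℝ) T ∧
          ¬ (∫⁻ x, ENNReal.ofReal (H (Z t x)) ∂μ ≤ ENNReal.ofReal C)} := by
        intro t ⟨htU, htIoo⟩
        refine ⟨htIoo, fun hb => ?_⟩
        have htIcc : t ∈ Set.Icc (0:ℝ) T := Set.Ioo_subset_Icc_self htIoo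
        have := hUsub ⟨htU, htIcc⟩
        exact absurd (hφle t htIcc hb) (not_le.mpr this)
      exact absurd (measure_mono_null hsub hbad) hpos.ne'
    -- φ t₀ equals ∫ g n (u x)
    have hφt₀eq : φ t₀ = ∫ x, g n (u x) ∂μ := by
      rw [hφeq t₀ ht₀]
      apply integral_congr_ae
      filter_upwards [huae] with x hx
      obtain ⟨k, hkn, hkmem, heqs⟩ := hFrep t₀ x
      rw [heqs, hx]
      exact hkmem.1
    -- conclude
    have hgu_int : Integrable (fun x => g n (u x)) μ :=
      (hgint n t₀ ht₀).congr (by filter_upwards [huae] with x hx; rw [hx])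
    rw [← ofReal_integral_eq_lintegral_ofReal hgu_int
      (Filter.Eventually.of_forall fun x => hgnn n _)]
    exact ENNReal.ofReal_le_ofReal (hφt₀eq ▸ hφt₀)
  -- pass to the supremum in n
  have hsup : ∫⁻ x, ENNReal.ofReal (H (u x)) ∂μ ≤ ENNReal.ofReal C := by
    have heq : ∀ y : ℝ, ENNReal.ofReal (H y) = ⨆ n, ENNReal.ofReal (g n y) := by
      intro y
      have hmono : Monotone fun n => ENNReal.ofReal (g n y) := by
        intro i j hij
        refine ENNReal.ofReal_le_ofReal ?_
        obtain ⟨k, hk, he⟩ := hatt i y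
        rw [he]
        exact hle j k y (hk.trans hij)
      have h1 : Tendsto (fun n => ENNReal.ofReal (g n y)) atTop
          (𝓝 (ENNReal.ofReal (H y))) := (ENNReal.continuous_ofReal.tendsto _).comp (htend y)
      have h2 : Tendsto (fun n => ENNReal.ofReal (g n y)) atTop
          (𝓝 (⨆ n, ENNReal.ofReal (g n y))) := tendsto_atTop_iSup hmono
      exact tendsto_nhds_unique h1 h2
    calc ∫⁻ x, ENNReal.ofReal (H (u x)) ∂μ
        = ∫⁻ x, ⨆ n, ENNReal.ofReal (g n (u x)) ∂μ := lintegral_congr fun x => heq (u x)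
      _ = ⨆ n, ∫⁻ x, ENNReal.ofReal (g n (u x)) ∂μ := by
          refine lintegral_iSup (fun n => ?_) (fun i j hij x => ?_)
          · exact ENNReal.measurable_ofReal.comp ((hgcont n).measurable.comp hum)
          · refine ENNReal.ofReal_le_ofReal ?_
            obtain ⟨k, hk, he⟩ := hatt i (u x)
            rw [he]
            exact hle j k _ (hk.trans hij)
      _ ≤ ENNReal.ofReal C := iSup_le main
  calc ∫⁻ x, ENNReal.ofReal (H (Z t₀ x)) ∂μ
      = ∫⁻ x, ENNReal.ofReal (H (u x)) ∂μ := by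
        apply lintegral_congr_ae
        filter_upwards [huae] with x hx
        rw [hx]
    _ ≤ ENNReal.ofReal C := hsup
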